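/- Let α ∈ ℝ and γ, σ ∈ ℂ satisfy Re γ > 0 and Re σ > -1. Then P_{γ-1}^{-σ-γ}(tanh α) · (cosh α)^{-γ} = (2^{-γ} / (Γ(γ) Γ(σ+1))) · ∫_0^∞ (sinh(t/2))^σ (cosh(t/2 + α))^{-σ-2γ} dt, where all complex powers of positive reals are principal branches. -/

import Mathlib

noncomputable def pochC (a : ℂ) (n : ℕ) : ℂ := (ascPochhammer ℂ n).eval a

open Complex

lemma pochC_zero (a : ℂ) : pochC a 0 = 1 := by simp [pochC]
lemma pochC_succ (a : ℂ) (n : ℕ) : pochC a (n+1) = pochC a n * (a + n) := by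
  simp [pochC, ascPochhammer_succ_eval]

lemma pochC_div_fact_bound (a : ℂ) (n : ℕ) :
    ‖pochC a n / n.factorial‖ ≤ ((n:ℝ)+1) ^ ⌈‖a‖⌉₊ := by
  set m := ⌈‖a‖⌉₊ with hm
  induction n with
  | zero => simp [pochC_zero]
  | succ n ih =>
      have hn1 : ‖((n:ℂ)+1)‖ = (n:ℝ)+1 := by
        rw [show ((n:ℂ)+1) = ((n+1:ℕ):ℂ) by push_cast; ring, Complex.norm_natCast]
        push_cast; ring
      have h1 : ‖pochC a (n+1) / (n+1).factorial‖
          = ‖pochC a n / n.factorial‖ * (‖a + n‖ / ((n:ℝ)+1)) := by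
        have hfact : ((n+1).factorial : ℂ) = (n.factorial : ℂ) * ((n:ℂ)+1) := by
          push_cast [Nat.factorial_succ]; ring
        have h2 : ‖((n.factorial:ℕ):ℂ)‖ ≠ 0 := by
          simp [Nat.factorial_ne_zero]
        have h3 : (n:ℝ)+1 ≠ 0 := by positivity
        rw [pochC_succ, hfact, norm_div, norm_mul, norm_mul, hn1, norm_div]
        field_simp
      have han : ‖a + n‖ ≤ (m:ℝ) + n := by
        calc ‖a + n‖ ≤ ‖a‖ + ‖(n:ℂ)‖ := norm_add_le _ _
        _ ≤ (m:ℝ) + n := by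
            have := Nat.le_ceil ‖a‖
            simp only [Complex.norm_natCast]; rw [hm]; linarith
      have hber : ((n:ℝ)+1) + m ≤ ((n:ℝ)+2)^m / ((n:ℝ)+1)^m * ((n:ℝ)+1) := by
        have hpos : (0:ℝ) < (n:ℝ)+1 := by positivity
        have h2 : (1 + (m:ℝ) * (1/((n:ℝ)+1))) ≤ (1 + 1/((n:ℝ)+1))^m := by
          have := one_add_mul_le_pow (a := 1/((n:ℝ)+1)) (le_trans (by norm_num : (-2:ℝ) ≤ 0) (by positivity)) m
          linarith [this]
        have h3 : (1 + 1/((n:ℝ)+1)) = ((n:ℝ)+2)/((n:ℝ)+1) := by field_simp; ring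
        rw [h3, div_pow] at h2
        calc ((n:ℝ)+1) + m = (1 + (m:ℝ) * (1/((n:ℝ)+1))) * ((n:ℝ)+1) := by field_simp
        _ ≤ ((n:ℝ)+2)^m / ((n:ℝ)+1)^m * ((n:ℝ)+1) :=
            mul_le_mul_of_nonneg_right h2 hpos.le
      have key : ((n:ℝ)+1)^m * (((m:ℝ)+n) / ((n:ℝ)+1)) ≤ ((n:ℝ)+2)^m := by
        rw [mul_div_assoc', div_le_iff₀ (by positivity : (0:ℝ) < (n:ℝ)+1)]
        have hpp : (0:ℝ) < ((n:ℝ)+1)^m := by positivity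
        have hne : ((n:ℝ)+1)^m ≠ 0 := hpp.ne'
        calc ((n:ℝ)+1)^m * ((m:ℝ)+n) ≤ (((n:ℝ)+1) + m) * ((n:ℝ)+1)^m := by nlinarith
        _ ≤ (((n:ℝ)+2)^m / ((n:ℝ)+1)^m * ((n:ℝ)+1)) * ((n:ℝ)+1)^m :=
            mul_le_mul_of_nonneg_right hber hpp.le
        _ = ((n:ℝ)+2)^m * ((n:ℝ)+1) := by field_simp
      calc ‖pochC a (n+1) / (n+1).factorial‖
          = ‖pochC a n / n.factorial‖ * (‖a + n‖ / ((n:ℝ)+1)) := h1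
        _ ≤ ((n:ℝ)+1)^m * (((m:ℝ)+n) / ((n:ℝ)+1)) := by
            gcongr <;> first
              | exact norm_nonneg _
              | linarith [han]
        _ ≤ ((n:ℝ)+2)^m := key
        _ = ((((n+1):ℕ):ℝ)+1)^m := by push_cast; ring_nf

lemma aux_summable (m : ℕ) {r : ℝ} (h0 : 0 ≤ r) (h1 : r < 1) :
    Summable (fun n : ℕ => ((n:ℝ)+1)^m * r^n) := by
  have h2m : (1:ℝ) ≤ 2^m := by
    calc (1:ℝ) = 1^m := (one_pow m).symm
    _ ≤ 2^m := by gcongr <;> norm_num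
  have hs : Summable (fun n : ℕ => (2:ℝ)^m * ((n:ℝ)^m * r^n) + (2:ℝ)^m * r^n) := by
    refine Summable.add (Summable.mul_left _ ?_)
      (Summable.mul_left _ (summable_geometric_of_lt_one h0 h1))
    exact summable_pow_mul_geometric_of_norm_lt_one m (by rwa [Real.norm_of_nonneg h0])
  refine Summable.of_nonneg_of_le (fun n => by positivity) (fun n => ?_) hs
  have hb : ((n:ℝ)+1)^m ≤ (2:ℝ)^m * (n:ℝ)^m + (2:ℝ)^m := by
    rcases Nat.eq_zero_or_pos n with h | h
    · subst h
      have : (0:ℝ) ≤ (2:ℝ)^m * (0:ℝ)^m := by positivity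
      simp only [Nat.cast_zero, zero_add, one_pow]
      linarith
    · have h1n : (1:ℝ) ≤ (n:ℝ) := by exact_mod_cast h
      calc ((n:ℝ)+1)^m ≤ ((2:ℝ)*n)^m := by
            apply pow_le_pow_left₀ (by positivity); linarith
      _ = (2:ℝ)^m * (n:ℝ)^m := by rw [mul_pow]
      _ ≤ (2:ℝ)^m * (n:ℝ)^m + (2:ℝ)^m := le_add_of_nonneg_right (by positivity)
  calc ((n:ℝ)+1)^m * r^n ≤ ((2:ℝ)^m * (n:ℝ)^m + (2:ℝ)^m) * r^n :=
        mul_le_mul_of_nonneg_right hb (by positivity)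
  _ = (2:ℝ)^m * ((n:ℝ)^m * r^n) + (2:ℝ)^m * r^n := by ring

lemma hasSum_binomial (a : ℂ) {x : ℝ} (h0 : 0 ≤ x) (h1 : x < 1) :
    HasSum (fun n : ℕ => pochC a n / n.factorial * (x:ℂ)^n) (((1 - x : ℝ):ℂ) ^ (-a)) := by
  set m := ⌈‖a‖⌉₊ with hm
  set r : ℝ := (1+x)/2 with hr
  have hr0 : (0:ℝ) < r := by rw [hr]; linarith
  have hrhalf : (1:ℝ)/2 ≤ r := by rw [hr]; linarith
  have hr1 : r < 1 := by rw [hr]; linarith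
  have hxr : x < r := by rw [hr]; linarith
  set c : ℕ → ℂ := fun n => pochC a n / n.factorial with hc
  set g : ℕ → ℝ → ℂ := fun n y => c n * (y:ℂ)^n with hg
  set g' : ℕ → ℝ → ℂ := fun n y => c n * (n * (y:ℂ)^(n-1)) with hg'
  set t : Set ℝ := Set.Ioo (-r) r with ht
  -- derivative of each term
  have hderiv : ∀ n : ℕ, ∀ y : ℝ, HasDerivAt (g n) (g' n y) y := by
    intro n y
    have h := (hasDerivAt_pow n ((y:ℝ):ℂ)).comp_ofReal
    exact h.const_mul (c n)
  -- uniform bound for derivatives on t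
  set u : ℕ → ℝ := fun n => 2 * (((n:ℝ)+1)^(m+1) * r^n) with hu
  have hu_sum : Summable u := (aux_summable (m+1) hr0.le hr1).mul_left 2
  have hbound : ∀ n : ℕ, ∀ y : ℝ, y ∈ t → ‖g' n y‖ ≤ u n := by
    intro n y hy
    have hyr : |y| ≤ r := by
      rw [abs_le]; exact ⟨(hy.1).le, (hy.2).le⟩
    have hcn : ‖c n‖ ≤ ((n:ℝ)+1)^m := pochC_div_fact_bound a n
    have hyn : ‖((y:ℝ):ℂ)^(n-1)‖ ≤ r^(n-1) := by
      rw [norm_pow, Complex.norm_real, Real.norm_eq_abs]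
      exact pow_le_pow_left₀ (abs_nonneg y) hyr _
    have hrn : r^(n-1) ≤ 2 * r^n := by
      rcases Nat.eq_zero_or_pos n with h | h
      · subst h; norm_num
      · have : n - 1 + 1 = n := Nat.succ_pred_eq_of_pos h
        calc r^(n-1) = r^(n-1+1) / r := by rw [pow_succ]; field_simp
        _ = r^n / r := by rw [this]
        _ ≤ r^n / (1/2) := by
            apply div_le_div_of_nonneg_left (by positivity) (by norm_num) hrhalf
        _ = 2 * r^n := by ring
    calc ‖g' n y‖ = ‖c n‖ * ((n:ℝ) * ‖((y:ℝ):ℂ)^(n-1)‖) := by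
          simp only [hg', norm_mul, Complex.norm_natCast]
    _ ≤ ((n:ℝ)+1)^m * (((n:ℝ)+1) * (2 * r^n)) := by
        apply mul_le_mul hcn ?_ (by positivity) (by positivity)
        exact mul_le_mul (by linarith) (hyn.trans hrn) (norm_nonneg _) (by positivity)
    _ = u n := by simp only [hu, pow_succ]; ring
  have h0t : (0:ℝ) ∈ t := by constructor <;> simp [hr0] <;> linarith
  have hxt : x ∈ t := by constructor <;> [linarith; exact hxr]
  have hg0 : Summable (fun n => g n 0) := by
    apply summable_of_ne_finset_zero (s := {0})
    intro n hn
    have : n ≠ 0 := by simpa using hn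
    simp [hg, zero_pow this]
  have htop : IsOpen t := isOpen_Ioo
  have htpre : IsPreconnected t := isPreconnected_Ioo
  -- summability at every point of t
  have hsummable : ∀ y : ℝ, y ∈ t → Summable (fun n => g n y) := by
    intro y hy
    exact summable_of_summable_hasDerivAt_of_isPreconnected hu_sum htop htpre
      (fun n z _ => hderiv n z) hbound h0t hg0 hy
  set S : ℝ → ℂ := fun y => ∑' n, g n y with hS
  have hSderiv : ∀ y : ℝ, y ∈ t → HasDerivAt S (∑' n, g' n y) y := by
    intro y hy
    exact hasDerivAt_tsum_of_isPreconnected hu_sum htop htpre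
      (fun n z _ => hderiv n z) hbound h0t hg0 hy
  have hkey : ∀ n : ℕ, c (n+1) * ((n:ℂ)+1) = c n * (a + n) := by
    intro n
    have hfac : (((n+1).factorial : ℕ) : ℂ) = (n.factorial : ℂ) * ((n:ℂ)+1) := by
      push_cast [Nat.factorial_succ]; ring
    have hne : ((n:ℂ)+1) ≠ 0 := by
      have h := (Nat.cast_ne_zero (R:=ℂ)).mpr (Nat.succ_ne_zero n)
      push_cast at h
      exact h
    have hfne : ((n.factorial:ℕ):ℂ) ≠ 0 := by
      exact Nat.cast_ne_zero.mpr n.factorial_ne_zero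
    simp only [hc, pochC_succ, hfac]
    field_simp
  -- the ODE : (1-y) * S' = a * S on t
  have hODE : ∀ y : ℝ, y ∈ t → (1 - (y:ℂ)) * (∑' n, g' n y) = a * S y := by
    intro y hy
    have hsum_g : Summable (fun n => g n y) := hsummable y hy
    have hsum_g' : Summable (fun n => g' n y) :=
      hu_sum.of_norm_bounded (fun n => hbound n y hy)
    have hterm : ∀ n : ℕ, g' (n+1) y = a * g n y + (y:ℂ) * g' n y := by
      intro n
      cases n with
      | zero =>
          show c 1 * ((((1:ℕ)):ℂ) * (y:ℂ)^(1-1)) =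
            a * (c 0 * (y:ℂ)^0) + (y:ℂ) * (c 0 * (((0:ℕ):ℂ) * (y:ℂ)^(0-1)))
          have h2 := hkey 0
          simp only [Nat.cast_zero, Nat.cast_one, pow_zero] at h2 ⊢
          simp only [zero_add] at h2
          rw [show (1:ℕ) - 1 = 0 from rfl, pow_zero]
          simp only [Nat.cast_zero, zero_mul, mul_zero, mul_one, add_zero]
          linear_combination h2
      | succ k =>
          show c (k+2) * ((((k+2:ℕ)):ℂ) * (y:ℂ)^(k+2-1)) =
            a * (c (k+1) * (y:ℂ)^(k+1)) + (y:ℂ) * (c (k+1) * (((k+1:ℕ):ℂ) * (y:ℂ)^(k+1-1)))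
          have h2 := hkey (k+1)
          push_cast at h2 ⊢
          linear_combination ((y:ℂ)^(k+1)) * h2
    have hshift : (∑' n, g' n y) = ∑' n, g' (n+1) y := by
      rw [Summable.tsum_eq_zero_add hsum_g']
      have : g' 0 y = 0 := by simp [hg']
      rw [this, zero_add]
    have hDsplit : (∑' n, g' n y) = a * S y + (y:ℂ) * (∑' n, g' n y) := by
      conv_lhs => rw [hshift]
      calc ∑' n, g' (n+1) y = ∑' n, (a * g n y + (y:ℂ) * g' n y) := tsum_congr hterm
      _ = (∑' n, a * g n y) + ∑' n, (y:ℂ) * g' n y :=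
          Summable.tsum_add (hsum_g.mul_left a) (hsum_g'.mul_left (y:ℂ))
      _ = a * S y + (y:ℂ) * (∑' n, g' n y) := by rw [tsum_mul_left, tsum_mul_left]
    linear_combination hDsplit
  -- the function (1-y)^a * S y has zero derivative on t
  set F : ℝ → ℂ := fun y => ((1:ℂ) - (y:ℂ))^a * S y with hF
  have hFd : ∀ y ∈ t, HasDerivAt F 0 y := by
    intro y hy
    have hy1 : y < 1 := lt_of_lt_of_le hy.2 hr1.le
    have hpos : (0:ℝ) < 1 - y := by linarith
    have hne : ((1:ℂ) - (y:ℂ)) ≠ 0 := by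
      rw [show ((1:ℂ) - (y:ℂ)) = (((1 - y : ℝ)):ℂ) by push_cast; ring]
      exact_mod_cast hpos.ne'
    have hbase : HasDerivAt (fun y:ℝ => (1:ℂ) - (y:ℂ)) (-1) y := by
      simpa using (Complex.ofRealCLM.hasDerivAt (x := y)).const_sub (1:ℂ)
    have hslit : ((1:ℂ) - (y:ℂ)) ∈ Complex.slitPlane := by
      rw [Complex.mem_slitPlane_iff]
      left
      simpa using hpos
    have hC : HasDerivAt (fun w:ℂ => (1-w)^a) (a * ((1:ℂ)-(y:ℂ))^(a-1) * (-1)) (y:ℂ) :=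
      HasDerivAt.cpow_const (f := fun w:ℂ => 1-w) (f' := -1)
        ((hasDerivAt_id ((y:ℝ):ℂ)).const_sub 1) hslit
    have hcp := hC.comp_ofReal
    have hmul := hcp.mul (hSderiv y hy)
    have hsplit : ((1:ℂ)-(y:ℂ))^a = ((1:ℂ)-(y:ℂ))^(a-1) * ((1:ℂ)-(y:ℂ)) := by
      conv_lhs => rw [show a = (a-1)+1 by ring]
      rw [Complex.cpow_add _ _ hne, Complex.cpow_one]
    rw [hsplit] at hmul
    refine hmul.congr_deriv ?_
    linear_combination (((1:ℂ)-(y:ℂ))^(a-1)) * hODE y hy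
  -- FTC: F is constant on [0, x]
  have huIcc : Set.uIcc (0:ℝ) x = Set.Icc 0 x := Set.uIcc_of_le h0
  have hFTC := intervalIntegral.integral_eq_sub_of_hasDerivAt
      (f := F) (f' := fun _ => (0:ℂ)) (a := 0) (b := x)
      (fun y hy => by
        apply hFd
        rw [huIcc] at hy
        exact ⟨by linarith [hy.1], lt_of_le_of_lt hy.2 hxr⟩)
      intervalIntegrable_const
  simp only [intervalIntegral.integral_const, smul_zero, sub_zero] at hFTC
  have hFx0 : F x = F 0 := sub_eq_zero.mp hFTC.symm
  have hS0 : S 0 = 1 := by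
    have hrfl : S 0 = ∑' n, g n 0 := rfl
    rw [hrfl, tsum_eq_single 0 ?_]
    · show c 0 * (((0:ℝ)):ℂ)^0 = 1
      simp [hc, pochC_zero]
    · intro n hn
      show c n * (((0:ℝ)):ℂ)^n = 0
      simp [zero_pow hn]
  have hF0 : F 0 = 1 := by simp [hF, hS0]
  have hxne : ((1:ℂ) - (x:ℂ)) ≠ 0 := by
    rw [show ((1:ℂ) - (x:ℂ)) = (((1 - x : ℝ)):ℂ) by push_cast; ring]
    exact_mod_cast (by linarith : (0:ℝ) < 1 - x).ne'
  have hane : ((1:ℂ)-(x:ℂ))^a ≠ 0 := by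
    rw [Complex.cpow_def_of_ne_zero hxne]
    exact Complex.exp_ne_zero _
  have hSx : ((1:ℂ)-(x:ℂ))^a * S x = 1 := by
    have : F x = 1 := hFx0.trans hF0
    exact this
  have hval : S x = (((1 - x : ℝ)):ℂ)^(-a) := by
    rw [show (((1 - x : ℝ)):ℂ) = (1:ℂ) - (x:ℂ) by push_cast; ring, Complex.cpow_neg]
    field_simp at hSx ⊢
    linear_combination hSx
  have hsum := (hsummable x hxt).hasSum
  rw [show (∑' n, g n x) = (((1 - x : ℝ)):ℂ)^(-a) from hval] at hsum
  exact hsum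

lemma Gamma_pos_ne_zero {s : ℂ} (hs : 0 < s.re) : Complex.Gamma s ≠ 0 := by
  apply Complex.Gamma_ne_zero
  intro m h
  rw [h] at hs
  simp only [Complex.neg_re, Complex.natCast_re] at hs
  have : (0:ℝ) ≤ (m:ℝ) := Nat.cast_nonneg m
  linarith

lemma Gamma_nat_shift {s : ℂ} (hs : 0 < s.re) (n : ℕ) :
    Complex.Gamma (s + n) = pochC s n * Complex.Gamma s := by
  induction n with
  | zero => simp [pochC_zero]
  | succ n ih =>
      have hre : 0 < (s + n).re := by
        simp only [Complex.add_re, Complex.natCast_re]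
        have : (0:ℝ) ≤ (n:ℝ) := Nat.cast_nonneg n
        linarith
      have hne : s + (n:ℂ) ≠ 0 := by
        intro h
        rw [h] at hre
        simp at hre
      have heq : s + ((n+1:ℕ):ℂ) = (s + n) + 1 := by push_cast; ring
      rw [heq, Complex.Gamma_add_one _ hne, ih, pochC_succ]
      ring

lemma beta_series {γ σ : ℂ} (hγ : 0 < γ.re) (hσ : -1 < σ.re) {w : ℝ}
    (hw0 : 0 ≤ w) (hw1 : w < 1) :
    ∫ v in Set.Ioo (0:ℝ) 1,
        ((v:ℝ):ℂ)^(γ-1) * (((1-v:ℝ)):ℂ)^σ * (((1-w*v:ℝ)):ℂ)^(γ-1)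
      = Complex.Gamma γ * Complex.Gamma (σ+1) *
        ∑' n : ℕ, pochC (1-γ) n * pochC γ n /
          (Complex.Gamma ((n:ℂ) + 1 + (σ+γ)) * (n.factorial:ℂ)) * ((w:ℝ):ℂ)^n := by
  have hσ1 : 0 < (σ+1).re := by simp [Complex.add_re]; linarith
  set c : ℕ → ℂ := fun n => pochC (1-γ) n / n.factorial with hc
  set F : ℕ → ℝ → ℂ := fun n v =>
    ((v:ℝ):ℂ)^(γ-1) * (((1-v:ℝ)):ℂ)^σ * (c n * (((w*v:ℝ)):ℂ)^n) with hF
  set G : ℕ → ℝ → ℂ := fun n v =>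
    ((v:ℝ):ℂ)^((γ+n)-1) * (1-((v:ℝ):ℂ))^((σ+1)-1) with hG
  -- pointwise binomial expansion
  have hpt : ∀ v ∈ Set.Ioo (0:ℝ) 1, HasSum (fun n => F n v)
      (((v:ℝ):ℂ)^(γ-1) * (((1-v:ℝ)):ℂ)^σ * (((1-w*v:ℝ)):ℂ)^(γ-1)) := by
    intro v hv
    have h0 : 0 ≤ w*v := mul_nonneg hw0 hv.1.le
    have h1 : w*v < 1 := by nlinarith [hv.1, hv.2]
    have hb := hasSum_binomial (1-γ) h0 h1
    rw [neg_sub] at hb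
    exact hb.mul_left _
  -- equality of F n and const • G n on the interval
  have heq : ∀ n : ℕ, ∀ v ∈ Set.Ioo (0:ℝ) 1,
      F n v = (c n * ((w:ℝ):ℂ)^n) * G n v := by
    intro n v hv
    have hv0 : ((v:ℝ):ℂ) ≠ 0 := by exact_mod_cast hv.1.ne'
    have h1 : (((w*v:ℝ)):ℂ)^n = ((w:ℝ):ℂ)^n * ((v:ℝ):ℂ)^n := by
      push_cast; rw [mul_pow]
    have h2 : ((v:ℝ):ℂ)^((γ+n)-1) = ((v:ℝ):ℂ)^(γ-1) * ((v:ℝ):ℂ)^n := by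
      rw [show (γ+n)-1 = (γ-1) + n by ring, Complex.cpow_add _ _ hv0,
        Complex.cpow_natCast]
    have h3 : (1 - ((v:ℝ):ℂ))^((σ+1)-1) = (((1-v:ℝ)):ℂ)^σ := by
      norm_num
    simp only [hF, hG, h1, h2, h3]
    ring
  -- integrability of G n on Ioo
  have hGint : ∀ n : ℕ, MeasureTheory.IntegrableOn (G n) (Set.Ioo 0 1) := by
    intro n
    have hre : 0 < (γ + n).re := by
      simp only [Complex.add_re, Complex.natCast_re]
      have : (0:ℝ) ≤ (n:ℝ) := Nat.cast_nonneg n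
      linarith
    have := Complex.betaIntegral_convergent hre hσ1
    exact ((intervalIntegrable_iff_integrableOn_Ioc_of_le (by norm_num)).mp this).mono_set
      Set.Ioo_subset_Ioc_self
  have hFint : ∀ n : ℕ, MeasureTheory.IntegrableOn (F n) (Set.Ioo 0 1) := by
    intro n
    exact (MeasureTheory.IntegrableOn.congr_fun ((hGint n).const_mul (c n * ((w:ℝ):ℂ)^n))
      (fun v hv => (heq n v hv).symm) measurableSet_Ioo)
  -- value of the n-th integral
  have hval : ∀ n : ℕ, ∫ v in Set.Ioo (0:ℝ) 1, F n v
      = Complex.Gamma γ * Complex.Gamma (σ+1) *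
        (pochC (1-γ) n * pochC γ n /
          (Complex.Gamma ((n:ℂ) + 1 + (σ+γ)) * (n.factorial:ℂ)) * ((w:ℝ):ℂ)^n) := by
    intro n
    have hre : 0 < (γ + n).re := by
      simp only [Complex.add_re, Complex.natCast_re]
      have : (0:ℝ) ≤ (n:ℝ) := Nat.cast_nonneg n
      linarith
    have h1 : ∫ v in Set.Ioo (0:ℝ) 1, F n v
        = (c n * ((w:ℝ):ℂ)^n) * ∫ v in Set.Ioo (0:ℝ) 1, G n v := by
      rw [← MeasureTheory.integral_const_mul]
      exact MeasureTheory.setIntegral_congr_fun measurableSet_Ioo (fun v hv => heq n v hv)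
    have h2 : ∫ v in Set.Ioo (0:ℝ) 1, G n v = Complex.betaIntegral (γ+n) (σ+1) := by
      rw [← MeasureTheory.integral_Ioc_eq_integral_Ioo, Complex.betaIntegral,
        intervalIntegral.integral_of_le (by norm_num : (0:ℝ) ≤ 1)]
    have h3 := Complex.Gamma_mul_Gamma_eq_betaIntegral hre hσ1
    have hdne : Complex.Gamma (γ + n + (σ+1)) ≠ 0 := by
      apply Gamma_pos_ne_zero
      simp only [Complex.add_re, Complex.natCast_re, Complex.one_re]
      have : (0:ℝ) ≤ (n:ℝ) := Nat.cast_nonneg n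
      linarith
    have h4 : Complex.betaIntegral (γ+n) (σ+1)
        = Complex.Gamma (γ+n) * Complex.Gamma (σ+1) / Complex.Gamma (γ + n + (σ+1)) := by
      field_simp
      linear_combination h3.symm
    have h5 : Complex.Gamma (γ+n) = pochC γ n * Complex.Gamma γ := Gamma_nat_shift hγ n
    have h6 : Complex.Gamma (γ + n + (σ+1)) = Complex.Gamma ((n:ℂ) + 1 + (σ+γ)) := by
      congr 1; ring
    rw [h1, h2, h4, h5, h6, hc]
    ring
  -- summability of the integrals of norms
  set m := ⌈‖(1:ℂ)-γ‖⌉₊ with hm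
  set C0 : ℝ := ∫ v in Set.Ioo (0:ℝ) 1, ‖((v:ℝ):ℂ)^(γ-1) * (((1-v:ℝ)):ℂ)^σ‖ with hC0
  have hBint : MeasureTheory.IntegrableOn
      (fun v : ℝ => ((v:ℝ):ℂ)^(γ-1) * (((1-v:ℝ)):ℂ)^σ) (Set.Ioo 0 1) := by
    have h := hGint 0
    apply MeasureTheory.IntegrableOn.congr_fun (h.const_mul 1) ?_ measurableSet_Ioo
    intro v hv
    have h3 : (1 - ((v:ℝ):ℂ))^((σ+1)-1) = (((1-v:ℝ)):ℂ)^σ := by norm_num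
    simp only [hG, Nat.cast_zero, add_zero, h3, one_mul]
  have hC0nn : 0 ≤ C0 := MeasureTheory.integral_nonneg (fun v => norm_nonneg _)
  have hnorm_le : ∀ n : ℕ, (∫ v in Set.Ioo (0:ℝ) 1, ‖F n v‖)
      ≤ (((n:ℝ)+1)^m * w^n) * C0 := by
    intro n
    have hcn : ‖c n‖ ≤ ((n:ℝ)+1)^m := pochC_div_fact_bound ((1:ℂ)-γ) n
    have hmono : ∀ v ∈ Set.Ioo (0:ℝ) 1,
        ‖F n v‖ ≤ (((n:ℝ)+1)^m * w^n) * ‖((v:ℝ):ℂ)^(γ-1) * (((1-v:ℝ)):ℂ)^σ‖ := by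
      intro v hv
      have h1 : ‖(((w*v:ℝ)):ℂ)^n‖ ≤ w^n := by
        rw [norm_pow, Complex.norm_real, Real.norm_eq_abs,
          _root_.abs_of_nonneg (mul_nonneg hw0 hv.1.le)]
        apply pow_le_pow_left₀ (mul_nonneg hw0 hv.1.le)
        nlinarith [hv.2]
      calc ‖F n v‖ = ‖((v:ℝ):ℂ)^(γ-1) * (((1-v:ℝ)):ℂ)^σ‖ * (‖c n‖ * ‖(((w*v:ℝ)):ℂ)^n‖) := by
            simp only [hF, norm_mul]
      _ ≤ ‖((v:ℝ):ℂ)^(γ-1) * (((1-v:ℝ)):ℂ)^σ‖ * (((n:ℝ)+1)^m * w^n) := by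
          apply mul_le_mul_of_nonneg_left ?_ (norm_nonneg _)
          exact mul_le_mul hcn h1 (norm_nonneg _) (by positivity)
      _ = (((n:ℝ)+1)^m * w^n) * ‖((v:ℝ):ℂ)^(γ-1) * (((1-v:ℝ)):ℂ)^σ‖ := by ring
    calc (∫ v in Set.Ioo (0:ℝ) 1, ‖F n v‖)
        ≤ ∫ v in Set.Ioo (0:ℝ) 1,
            (((n:ℝ)+1)^m * w^n) * ‖((v:ℝ):ℂ)^(γ-1) * (((1-v:ℝ)):ℂ)^σ‖ := by
          apply MeasureTheory.setIntegral_mono_on (hFint n).norm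
            (hBint.norm.const_mul _) measurableSet_Ioo hmono
    _ = (((n:ℝ)+1)^m * w^n) * C0 := by rw [MeasureTheory.integral_const_mul]
  have hsum_norm : Summable (fun n => ∫ v in Set.Ioo (0:ℝ) 1, ‖F n v‖) := by
    apply Summable.of_nonneg_of_le
      (fun n => MeasureTheory.integral_nonneg (fun v => norm_nonneg _)) hnorm_le
    exact (aux_summable m hw0 hw1).mul_right C0
  -- interchange sum and integral
  have hkey := MeasureTheory.hasSum_integral_of_summable_integral_norm
    (μ := MeasureTheory.volume.restrict (Set.Ioo (0:ℝ) 1)) (F := F) hFint hsum_norm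
  have hfinal : ∫ v in Set.Ioo (0:ℝ) 1,
      ((v:ℝ):ℂ)^(γ-1) * (((1-v:ℝ)):ℂ)^σ * (((1-w*v:ℝ)):ℂ)^(γ-1)
      = ∫ v in Set.Ioo (0:ℝ) 1, ∑' n, F n v := by
    apply MeasureTheory.setIntegral_congr_fun measurableSet_Ioo
    intro v hv
    exact ((hpt v hv).tsum_eq).symm
  rw [hfinal, ← hkey.tsum_eq]
  rw [tsum_congr hval, tsum_mul_left]

lemma cpow_exp_log {b : ℝ} (hb : 0 < b) (s : ℂ) :
    ((b:ℝ):ℂ)^s = Complex.exp ((Real.log b : ℂ) * s) := by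
  rw [Complex.cpow_def_of_ne_zero (by exact_mod_cast hb.ne'), Complex.ofReal_log hb.le]

lemma ofReal_eq_exp_log {b : ℝ} (hb : 0 < b) :
    ((b:ℝ):ℂ) = Complex.exp ((Real.log b : ℂ)) := by
  conv_lhs => rw [← Real.exp_log hb]
  rw [Complex.ofReal_exp]

lemma subst_step (α : ℝ) (σ γ : ℂ) :
    (∫ t in Set.Ioi (0:ℝ),
        ((Real.sinh (t/2) : ℝ):ℂ)^σ * ((Real.cosh (t/2 + α) : ℝ):ℂ)^(-σ-2*γ))
      = (((4:ℝ)):ℂ)^γ * ((Real.exp α : ℝ):ℂ)^(-σ-2*γ) *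
          (((1 + Real.exp (-(2*α)) : ℝ)):ℂ)^(-γ) *
        ∫ v in Set.Ioo (0:ℝ) 1,
          ((v:ℝ):ℂ)^(γ-1) * (((1-v:ℝ)):ℂ)^σ *
            (((1 - (Real.exp (-(2*α)) / (1 + Real.exp (-(2*α)))) * v : ℝ)):ℂ)^(γ-1) := by
  set z : ℝ := Real.exp (-(2*α)) with hz
  have hz0 : 0 < z := Real.exp_pos _
  have hz1 : 0 < 1 + z := by linarith
  set w : ℝ := z / (1+z) with hw
  set g : ℝ → ℝ := fun v => Real.log ((1+z)/v - z) with hg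
  set g' : ℝ → ℝ := fun v => -((1+z)/(v * (1+z-z*v))) with hg'
  have hD : ∀ v : ℝ, v ∈ Set.Ioo (0:ℝ) 1 → 0 < 1+z-z*v := by
    intro v hv; nlinarith [hv.1, hv.2]
  have hDv : ∀ v : ℝ, v ∈ Set.Ioo (0:ℝ) 1 → (1+z)/v - z = (1+z-z*v)/v := by
    intro v hv
    have hv0 : v ≠ 0 := hv.1.ne'
    field_simp
  have hinner_pos : ∀ v : ℝ, v ∈ Set.Ioo (0:ℝ) 1 → 0 < (1+z)/v - z := by
    intro v hv; rw [hDv v hv]; exact div_pos (hD v hv) hv.1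
  -- image
  have himg : g '' Set.Ioo (0:ℝ) 1 = Set.Ioi 0 := by
    apply Set.eq_of_subset_of_subset
    · rintro t ⟨v, hv, rfl⟩
      have h1 : (1:ℝ) < (1+z)/v - z := by
        rw [hDv v hv, lt_div_iff₀ hv.1]
        nlinarith [hv.1, hv.2]
      exact Real.log_pos h1
    · intro t ht
      have ht0 : (0:ℝ) < t := ht
      have hexp : (1:ℝ) < Real.exp t := by
        rw [← Real.exp_zero]
        exact Real.exp_lt_exp.mpr ht0
      refine ⟨(1+z)/(Real.exp t + z), ⟨?_, ?_⟩, ?_⟩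
      · positivity
      · rw [div_lt_one (by positivity)]
        linarith
      · show Real.log ((1+z)/((1+z)/(Real.exp t + z)) - z) = t
        have hcc : (1+z)/((1+z)/(Real.exp t + z)) = Real.exp t + z := by
          rw [div_div_cancel₀]
          exact hz1.ne'
        rw [hcc, add_sub_cancel_right, Real.log_exp]
  -- derivative
  have hderiv : ∀ v ∈ Set.Ioo (0:ℝ) 1, HasDerivWithinAt g (g' v) (Set.Ioo 0 1) v := by
    intro v hv
    have hv0 : v ≠ 0 := hv.1.ne'
    have hinner : HasDerivAt (fun v : ℝ => (1+z)/v - z) (-((1+z)/v^2)) v := by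
      have h := ((hasDerivAt_inv hv0).const_mul (1+z)).sub_const z
      have h3 : (fun v:ℝ => (1+z)/v - z) = (fun x:ℝ => (1+z)*x⁻¹ - z) := by
        funext y; rw [div_eq_mul_inv]
      rw [h3, show -((1+z)/v^2) = (1+z) * -((v^2)⁻¹) by ring]
      exact h
    have hlog := (Real.hasDerivAt_log (hinner_pos v hv).ne').comp v hinner
    have : HasDerivAt g (((1+z)/v - z)⁻¹ * (-((1+z)/v^2))) v := hlog
    have heq : ((1+z)/v - z)⁻¹ * (-((1+z)/v^2)) = g' v := by
      rw [hDv v hv, hg']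
      have h1 : (1+z-z*v) ≠ 0 := (hD v hv).ne'
      field_simp
    exact (heq ▸ this).hasDerivWithinAt
  -- injectivity
  have hinj : Set.InjOn g (Set.Ioo (0:ℝ) 1) := by
    intro v1 hv1 v2 hv2 h
    have h1 := Real.exp_log (hinner_pos v1 hv1)
    have h2 := Real.exp_log (hinner_pos v2 hv2)
    have : (1+z)/v1 - z = (1+z)/v2 - z := by
      rw [← h1, ← h2]
      exact congrArg Real.exp h
    have h3 : (1+z)/v1 = (1+z)/v2 := by linarith
    have hv10 : v1 ≠ 0 := hv1.1.ne'
    have hv20 : v2 ≠ 0 := hv2.1.ne'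
    field_simp at h3
    linarith
  -- change of variables
  have hcov := MeasureTheory.integral_image_eq_integral_abs_deriv_smul measurableSet_Ioo hderiv hinj
    (fun t => ((Real.sinh (t/2) : ℝ):ℂ)^σ * ((Real.cosh (t/2 + α) : ℝ):ℂ)^(-σ-2*γ))
  rw [← himg, hcov]
  -- pointwise identity
  rw [← MeasureTheory.integral_const_mul]
  apply MeasureTheory.setIntegral_congr_fun measurableSet_Ioo
  intro v hv
  have hv0 : (0:ℝ) < v := hv.1
  have hv1 : v < 1 := hv.2
  have hDpos : 0 < 1+z-z*v := hD v hv
  have h1v : (0:ℝ) < 1 - v := by linarith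
  set t := g v with htdef
  set D : ℝ := 1+z-z*v with hDdef
  have hht : Real.exp t = D/v := by
    rw [htdef]
    show Real.exp (Real.log ((1+z)/v - z)) = D/v
    rw [Real.exp_log (hinner_pos v hv), hDv v hv]
  set E := Real.exp (t/2) with hEdef
  have hE0 : 0 < E := Real.exp_pos _
  have hE2 : E*E = D/v := by
    rw [hEdef, ← Real.exp_add, show t/2+t/2 = t by ring]
    exact hht
  have hEEv : E*E*v = D := by rw [hE2]; field_simp
  set eα := Real.exp α with heαdef
  have heα0 : 0 < eα := Real.exp_pos _
  have hza : z * (eα*eα) = 1 := by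
    rw [hz, heαdef, ← Real.exp_add, ← Real.exp_add,
      show -(2*α)+(α+α) = 0 by ring, Real.exp_zero]
  have hsinh : Real.sinh (t/2) = (1+z)*(1-v)/(2*E*v) := by
    rw [Real.sinh_eq, Real.exp_neg, ← hEdef]
    rw [div_eq_div_iff (by norm_num) (by positivity)]
    field_simp
    linear_combination hEEv
  have hcosh : Real.cosh (t/2+α) = eα*(1+z)/(2*E*v) := by
    rw [Real.cosh_eq, Real.exp_neg, Real.exp_add, ← hEdef, ← heαdef]
    rw [div_eq_div_iff (by norm_num) (by positivity)]
    field_simp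
    linear_combination eα^2*hEEv - v*hza
  have habs : |g' v| = (1+z)/(v*D) := by
    have : g' v = -((1+z)/(v*D)) := rfl
    rw [this, abs_neg, abs_of_pos (by positivity)]
  have hwv : 1 - w*v = D/(1+z) := by
    rw [hw, hDdef]
    field_simp
  have hwvpos : (0:ℝ) < 1 - w*v := by rw [hwv]; positivity
  -- pass to exponentials
  beta_reduce
  rw [Complex.real_smul, habs, hsinh, hcosh, hwv]
  have hp1 : (0:ℝ) < (1+z)*(1-v)/(2*E*v) := by positivity
  have hp2 : (0:ℝ) < eα*(1+z)/(2*E*v) := by positivity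
  have hp3 : (0:ℝ) < (1+z)/(v*D) := by positivity
  have hp4 : (0:ℝ) < D/(1+z) := by positivity
  rw [cpow_exp_log hp1 σ, cpow_exp_log hp2 (-σ-2*γ), ofReal_eq_exp_log hp3,
    show ((4:ℝ):ℂ) = (((4:ℝ)):ℂ) from rfl, cpow_exp_log (by norm_num : (0:ℝ) < 4) γ,
    cpow_exp_log heα0 (-σ-2*γ), cpow_exp_log hz1 (-γ), cpow_exp_log hv0 (γ-1),
    cpow_exp_log h1v σ, cpow_exp_log hp4 (γ-1)]
  simp only [← Complex.exp_add]
  congr 1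
  -- real log identities
  have r1 : Real.log ((1+z)*(1-v)/(2*E*v))
      = Real.log (1+z) + Real.log (1-v) - (Real.log 2 + Real.log E + Real.log v) := by
    rw [Real.log_div (by positivity) (by positivity),
      Real.log_mul (by positivity) (by positivity),
      Real.log_mul (by positivity) (by positivity),
      Real.log_mul (by positivity) (by positivity)]
  have r2 : Real.log (eα*(1+z)/(2*E*v))
      = α + Real.log (1+z) - (Real.log 2 + Real.log E + Real.log v) := by
    rw [Real.log_div (by positivity) (by positivity),
      Real.log_mul (by positivity) (by positivity),
      Real.log_mul (by positivity) (by positivity),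
      Real.log_mul (by positivity) (by positivity), heαdef, Real.log_exp]
  have r3 : Real.log ((1+z)/(v*D)) = Real.log (1+z) - (Real.log v + Real.log D) := by
    rw [Real.log_div (by positivity) (by positivity),
      Real.log_mul (by positivity) (by positivity)]
  have r4 : Real.log (D/(1+z)) = Real.log D - Real.log (1+z) :=
    Real.log_div (by positivity) (by positivity)
  have r5 : Real.log (4:ℝ) = 2 * Real.log 2 := by
    rw [show (4:ℝ) = 2*2 by norm_num, Real.log_mul (by norm_num) (by norm_num)]
    ring
  have r6 : 2 * Real.log E = Real.log D - Real.log v := by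
    have h := congrArg Real.log hE2
    rw [Real.log_mul hE0.ne' hE0.ne', Real.log_div hDpos.ne' hv0.ne'] at h
    linarith
  have r7 : Real.log eα = α := by rw [heαdef, Real.log_exp]
  have c1 := congrArg (Complex.ofReal) r1
  have c2 := congrArg (Complex.ofReal) r2
  have c3 := congrArg (Complex.ofReal) r3
  have c4 := congrArg (Complex.ofReal) r4
  have c5 := congrArg (Complex.ofReal) r5
  have c6 := congrArg (Complex.ofReal) r6
  have c7 := congrArg (Complex.ofReal) r7
  push_cast at c1 c2 c3 c4 c5 c6 c7
  linear_combination σ*c1 + (-σ-2*γ)*c2 + c3 + (1-γ)*c4 - γ*c5 + γ*c6 + (σ+2*γ)*c7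


/-- Ferrers function of the first kind `P_ν^μ(x)`. -/
noncomputable def ferrersP (ν μ : ℂ) (x : ℝ) : ℂ :=
  (((1 + x) / (1 - x) : ℝ) : ℂ) ^ (μ / 2) *
    ∑' n : ℕ, pochC (-ν) n * pochC (ν + 1) n /
        (Complex.Gamma ((n : ℂ) + 1 - μ) * (n.factorial : ℂ)) *
      (((1 - x) / 2 : ℝ) : ℂ) ^ n

theorem stmt1 (α : ℝ) (γ σ : ℂ) (hγ : 0 < γ.re) (hσ : -1 < σ.re) :
    ferrersP (γ - 1) (-(σ + γ)) (Real.tanh α) * ((Real.cosh α : ℝ) : ℂ) ^ (-γ) =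
      (2 : ℂ) ^ (-γ) / (Complex.Gamma γ * Complex.Gamma (σ + 1)) *
        ∫ t in Set.Ioi (0 : ℝ),
          ((Real.sinh (t / 2) : ℝ) : ℂ) ^ σ *
            ((Real.cosh (t / 2 + α) : ℝ) : ℂ) ^ (-σ - 2 * γ) := by
  set z : ℝ := Real.exp (-(2*α)) with hz
  have hz0 : 0 < z := Real.exp_pos _
  have hz1 : 0 < 1 + z := by linarith
  set w : ℝ := z / (1+z) with hw
  have hw0 : 0 ≤ w := by positivity
  have hw1 : w < 1 := by
    rw [hw, div_lt_one hz1]; linarith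
  set a : ℝ := Real.exp α with ha
  set b : ℝ := Real.exp (-α) with hb
  have ha0 : 0 < a := Real.exp_pos _
  have hb0 : 0 < b := Real.exp_pos _
  have hab : a * b = 1 := by
    rw [ha, hb, ← Real.exp_add]; simp
  have hzb : z = b*b := by rw [hz, hb, ← Real.exp_add]; ring_nf
  have hcosh : Real.cosh α = (a+b)/2 := by rw [Real.cosh_eq]
  have hsinh : Real.sinh α = (a-b)/2 := by rw [Real.sinh_eq]
  have hcosh0 : 0 < Real.cosh α := Real.cosh_pos α
  have htanh : Real.tanh α = (a-b)/(a+b) := by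
    rw [Real.tanh_eq_sinh_div_cosh, hcosh, hsinh]
    field_simp
  have hab0 : 0 < a + b := by linarith
  have htw : (1 - Real.tanh α)/2 = w := by
    rw [htanh, hw, hzb]
    field_simp
    nlinarith [hab]
  have hratio : (1 + Real.tanh α)/(1 - Real.tanh α) = Real.exp (2*α) := by
    rw [htanh, show Real.exp (2*α) = a*a by rw [ha, ← Real.exp_add]; ring_nf]
    have h2 : 1 - (a-b)/(a+b) = 2*b/(a+b) := by field_simp; ring
    have hden : 1 - (a-b)/(a+b) ≠ 0 := by rw [h2]; positivity
    rw [div_eq_iff hden, h2]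
    field_simp
    nlinarith [hab]
  have h1z : 1 + z = 2 * Real.cosh α * b := by
    rw [hcosh, hzb]
    field_simp
    nlinarith [hab]
  -- main ingredients
  have hsub := subst_step α σ γ
  have hβ := beta_series hγ hσ hw0 hw1
  rw [hsub, hβ]
  -- identify the tsum in ferrersP
  have hTT : ∀ n : ℕ,
      pochC (-(γ-1)) n * pochC ((γ-1) + 1) n /
          (Complex.Gamma ((n:ℂ) + 1 - (-(σ+γ))) * (n.factorial:ℂ)) *
        ((((1 - Real.tanh α)/2 : ℝ)):ℂ)^n
      = pochC (1-γ) n * pochC γ n /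
          (Complex.Gamma ((n:ℂ) + 1 + (σ+γ)) * (n.factorial:ℂ)) * ((w:ℝ):ℂ)^n := by
    intro n
    rw [show -(γ-1) = 1-γ by ring, show (γ-1)+1 = γ by ring,
      show (n:ℂ)+1-(-(σ+γ)) = (n:ℂ)+1+(σ+γ) by ring, htw]
  set T : ℂ := ∑' n : ℕ, pochC (1-γ) n * pochC γ n /
      (Complex.Gamma ((n:ℂ) + 1 + (σ+γ)) * (n.factorial:ℂ)) * ((w:ℝ):ℂ)^n with hT
  have hfer : ferrersP (γ - 1) (-(σ + γ)) (Real.tanh α)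
      = ((Real.exp (2*α) : ℝ):ℂ)^((-(σ+γ))/2) * T := by
    rw [ferrersP, hratio, hT]
    congr 1
    exact tsum_congr hTT
  rw [hfer]
  -- prefactor computation
  have hGγ : Complex.Gamma γ ≠ 0 := Gamma_pos_ne_zero hγ
  have hGσ : Complex.Gamma (σ+1) ≠ 0 := by
    apply Gamma_pos_ne_zero
    simp [Complex.add_re]
    linarith
  have hclaim : ((Real.exp (2*α) : ℝ):ℂ)^((-(σ+γ))/2) * ((Real.cosh α : ℝ):ℂ)^(-γ)
      = (((2:ℝ)):ℂ)^(-γ) * ((((4:ℝ)):ℂ)^γ * ((Real.exp α : ℝ):ℂ)^(-σ-2*γ) *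
          (((1 + z : ℝ)):ℂ)^(-γ)) := by
    rw [cpow_exp_log (Real.exp_pos _) ((-(σ+γ))/2), cpow_exp_log hcosh0 (-γ),
      cpow_exp_log (by norm_num : (0:ℝ) < 2) (-γ),
      cpow_exp_log (by norm_num : (0:ℝ) < 4) γ,
      cpow_exp_log ha0 (-σ-2*γ), cpow_exp_log hz1 (-γ)]
    simp only [← Complex.exp_add]
    congr 1
    have r1 : Real.log (Real.exp (2*α)) = 2*α := Real.log_exp _
    have r2 : Real.log (1+z) = Real.log 2 + Real.log (Real.cosh α) - α := by
      rw [h1z, Real.log_mul (by positivity) hb0.ne',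
        Real.log_mul (by norm_num) hcosh0.ne', hb, Real.log_exp]
      ring
    have r3 : Real.log (4:ℝ) = 2 * Real.log 2 := by
      rw [show (4:ℝ) = 2*2 by norm_num, Real.log_mul (by norm_num) (by norm_num)]
      ring
    have r4 : Real.log a = α := by rw [ha, Real.log_exp]
    have c1 := congrArg (Complex.ofReal) r1
    have c2 := congrArg (Complex.ofReal) r2
    have c3 := congrArg (Complex.ofReal) r3
    have c4 := congrArg (Complex.ofReal) r4
    push_cast at c1 c2 c3 c4
    linear_combination (-(σ+γ)/2)*c1 + γ*c2 - γ*c3 + (σ+2*γ)*c4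
  -- final algebra
  have hG : Complex.Gamma γ * Complex.Gamma (σ+1) ≠ 0 := mul_ne_zero hGγ hGσ
  have habc : ∀ (A B C D : ℂ), C ≠ 0 → A / C * (B * (C * D)) = A * (B * D) := by
    intro A B C D hC
    field_simp
  rw [habc _ _ _ _ hG]
  have h2c : (2:ℂ)^(-γ) = (((2:ℝ)):ℂ)^(-γ) := by norm_num
  rw [h2c]
  linear_combination T * hclaim
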